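/- Let q1 be the integral quaternary quadratic form q1(w,x,y,z) = 2w² + 3x² + 3y² + 4z² + 2xy. Then for every integer n > 1 there exist integers w, x, y, z such that q1(w,x,y,z) = n. -/

import Mathlib

lemma round_exists (h b : ℤ) (hb : 0 < b) : ∃ k : ℤ, |2*(h + b*k)| ≤ b := by
  have hdiv : b * (h / b) + h % b = h := Int.mul_ediv_add_emod h b
  have hlt : h % b < b := Int.emod_lt_of_pos h hb
  have hge : 0 ≤ h % b := Int.emod_nonneg h (ne_of_gt hb)
  by_cases hc : 2 * (h % b) ≤ b
  · refine ⟨-(h / b), ?_⟩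
    rw [abs_le]; constructor <;> nlinarith
  · refine ⟨-(h / b) - 1, ?_⟩
    rw [abs_le]; constructor <;> nlinarith

/-- Gauss reduction of positive binary quadratic forms, with unimodular transform. -/
lemma bin_reduce : ∀ (μ : ℕ) (a h b : ℤ),
    (∀ x y : ℤ, ¬(x = 0 ∧ y = 0) → 0 < a*x^2 + 2*h*(x*y) + b*y^2) →
    (a + b).toNat ≤ μ →
    ∃ p q r s : ℤ, p*s - q*r = 1 ∧
      |2*(a*(p*q) + h*(p*s + q*r) + b*(r*s))| ≤ a*p^2 + 2*h*(p*r) + b*r^2 ∧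
      a*p^2 + 2*h*(p*r) + b*r^2 ≤ a*q^2 + 2*h*(q*s) + b*s^2 := by
  intro μ
  induction μ with
  | zero =>
    intro a h b hpos hμ
    have ha : 0 < a := by simpa using hpos 1 0 (by simp)
    have hb : 0 < b := by simpa using hpos 0 1 (by simp)
    omega
  | succ μ ih =>
    intro a h b hpos hμ
    have ha : 0 < a := by simpa using hpos 1 0 (by simp)
    have hb : 0 < b := by simpa using hpos 0 1 (by simp)
    by_cases hcb : b < |2*h|
    · -- translate (x,y) ↦ (x, k*x+y); reduces a
      obtain ⟨k, hk⟩ := round_exists h b hb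
      have hval : ∀ x y : ℤ, (a + 2*h*k + b*k^2)*x^2 + 2*(h+b*k)*(x*y) + b*y^2
          = a*x^2 + 2*h*(x*(k*x+y)) + b*(k*x+y)^2 := by intro x y; ring
      have hpos' : ∀ x y : ℤ, ¬(x = 0 ∧ y = 0) →
          0 < (a + 2*h*k + b*k^2)*x^2 + 2*(h+b*k)*(x*y) + b*y^2 := by
        intro x y hxy
        rw [hval]
        refine hpos x (k*x+y) ?_
        rintro ⟨rfl, h2⟩; exact hxy ⟨rfl, by omega⟩
      have ha' : 0 < a + 2*h*k + b*k^2 := by simpa using hpos' 1 0 (by simp)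
      have habs := abs_le.mp hk
      have habs2 : b ≤ |2*h| - 1 := by omega
      have hb2 : b^2 < (2*h)^2 := by nlinarith [sq_abs (2*h), abs_nonneg (2*h)]
      have hless : a + 2*h*k + b*k^2 < a := by nlinarith
      obtain ⟨p, q, r, s, hdet, h1, h2⟩ :=
        ih (a + 2*h*k + b*k^2) (h+b*k) b hpos' (by omega)
      refine ⟨p, q, k*p + r, k*q + s, by linear_combination hdet, ?_, ?_⟩
      · have eH : a*(p*q) + h*(p*(k*q+s) + q*(k*p+r)) + b*((k*p+r)*(k*q+s))
            = (a + 2*h*k + b*k^2)*(p*q) + (h+b*k)*(p*s + q*r) + b*(r*s) := by ring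
        have eA : a*p^2 + 2*h*(p*(k*p+r)) + b*(k*p+r)^2
            = (a + 2*h*k + b*k^2)*p^2 + 2*(h+b*k)*(p*r) + b*r^2 := by ring
        rw [eH, eA]; exact h1
      · have eA : a*p^2 + 2*h*(p*(k*p+r)) + b*(k*p+r)^2
            = (a + 2*h*k + b*k^2)*p^2 + 2*(h+b*k)*(p*r) + b*r^2 := by ring
        have eB : a*q^2 + 2*h*(q*(k*q+s)) + b*(k*q+s)^2
            = (a + 2*h*k + b*k^2)*q^2 + 2*(h+b*k)*(q*s) + b*s^2 := by ring
        rw [eA, eB]; exact h2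
    · by_cases hca : a < |2*h|
      · -- translate (x,y) ↦ (x+k*y, y); reduces b
        obtain ⟨k, hk⟩ := round_exists h a ha
        have hval : ∀ x y : ℤ, a*x^2 + 2*(h+a*k)*(x*y) + (b + 2*h*k + a*k^2)*y^2
            = a*(x+k*y)^2 + 2*h*((x+k*y)*y) + b*y^2 := by intro x y; ring
        have hpos' : ∀ x y : ℤ, ¬(x = 0 ∧ y = 0) →
            0 < a*x^2 + 2*(h+a*k)*(x*y) + (b + 2*h*k + a*k^2)*y^2 := by
          intro x y hxy
          rw [hval]
          refine hpos (x+k*y) y ?_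
          rintro ⟨h2, rfl⟩; exact hxy ⟨by omega, rfl⟩
        have hb' : 0 < b + 2*h*k + a*k^2 := by simpa using hpos' 0 1 (by simp)
        have habs := abs_le.mp hk
        have ha2 : a^2 < (2*h)^2 := by nlinarith [sq_abs (2*h), abs_nonneg (2*h)]
        have hless : b + 2*h*k + a*k^2 < b := by nlinarith
        obtain ⟨p, q, r, s, hdet, h1, h2⟩ :=
          ih a (h+a*k) (b + 2*h*k + a*k^2) hpos' (by omega)
        refine ⟨p + k*r, q + k*s, r, s, by linear_combination hdet, ?_, ?_⟩
        · have eH : a*((p+k*r)*(q+k*s)) + h*((p+k*r)*s + (q+k*s)*r) + b*(r*s)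
              = a*(p*q) + (h+a*k)*(p*s + q*r) + (b + 2*h*k + a*k^2)*(r*s) := by ring
          have eA : a*(p+k*r)^2 + 2*h*((p+k*r)*r) + b*r^2
              = a*p^2 + 2*(h+a*k)*(p*r) + (b + 2*h*k + a*k^2)*r^2 := by ring
          rw [eH, eA]; exact h1
        · have eA : a*(p+k*r)^2 + 2*h*((p+k*r)*r) + b*r^2
              = a*p^2 + 2*(h+a*k)*(p*r) + (b + 2*h*k + a*k^2)*r^2 := by ring
          have eB : a*(q+k*s)^2 + 2*h*((q+k*s)*s) + b*s^2
              = a*q^2 + 2*(h+a*k)*(q*s) + (b + 2*h*k + a*k^2)*s^2 := by ring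
          rw [eA, eB]; exact h2
      · -- already |2h| ≤ a and |2h| ≤ b
        by_cases hab : a ≤ b
        · refine ⟨1, 0, 0, 1, by norm_num, ?_, ?_⟩
          · have e1 : a*(1*0) + h*(1*1 + 0*0) + b*(0*1) = h := by ring
            have e2 : a*1^2 + 2*h*(1*0) + b*0^2 = a := by ring
            rw [e1, e2]; omega
          · have e2 : a*1^2 + 2*h*(1*0) + b*0^2 = a := by ring
            have e3 : a*0^2 + 2*h*(0*1) + b*1^2 = b := by ring
            rw [e2, e3]; exact hab
        · refine ⟨0, -1, 1, 0, by norm_num, ?_, ?_⟩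
          · have e1 : |2*(a*(0*(-1)) + h*(0*0 + (-1)*1) + b*(1*0))| = |2*h| := by
              rw [show 2*(a*(0*(-1)) + h*(0*0 + (-1)*1) + b*(1*0)) = -(2*h) by ring, abs_neg]
            have e2 : a*0^2 + 2*h*(0*1) + b*1^2 = b := by ring
            rw [e1, e2]; omega
          · have e2 : a*0^2 + 2*h*(0*1) + b*1^2 = b := by ring
            have e3 : a*(-1)^2 + 2*h*((-1)*0) + b*0^2 = a := by ring
            rw [e2, e3]; omega

/-- Every positive binary form attains a small value: `3 v² ≤ 4 det`. -/
lemma bin_value_bound (a h b : ℤ)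
    (hpos : ∀ x y : ℤ, ¬(x = 0 ∧ y = 0) → 0 < a*x^2 + 2*h*(x*y) + b*y^2) :
    ∃ v : ℤ, 0 < v ∧ 3*v^2 ≤ 4*(a*b - h^2) ∧
      ∃ x y : ℤ, ¬(x = 0 ∧ y = 0) ∧ a*x^2 + 2*h*(x*y) + b*y^2 = v := by
  obtain ⟨p, q, r, s, hdet, h1, h2⟩ := bin_reduce (a+b).toNat a h b hpos le_rfl
  have hpr : ¬(p = 0 ∧ r = 0) := by rintro ⟨rfl, rfl⟩; simp at hdet
  have hqs : ¬(q = 0 ∧ s = 0) := by rintro ⟨rfl, rfl⟩; simp at hdet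
  have hA : 0 < a*p^2 + 2*h*(p*r) + b*r^2 := hpos p r hpr
  have hB : 0 < a*q^2 + 2*h*(q*s) + b*s^2 := hpos q s hqs
  have hdet2 : (a*p^2 + 2*h*(p*r) + b*r^2) * (a*q^2 + 2*h*(q*s) + b*s^2)
      - (a*(p*q) + h*(p*s + q*r) + b*(r*s))^2 = (a*b - h^2)*(p*s - q*r)^2 := by ring
  refine ⟨a*p^2 + 2*h*(p*r) + b*r^2, hA, ?_, p, r, hpr, rfl⟩
  have habs := abs_le.mp h1
  have hH2 : 4*(a*(p*q) + h*(p*s + q*r) + b*(r*s))^2 ≤ (a*p^2 + 2*h*(p*r) + b*r^2)^2 := by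
    nlinarith [habs.1, habs.2]
  have hAB : (a*p^2 + 2*h*(p*r) + b*r^2)^2
      ≤ (a*p^2 + 2*h*(p*r) + b*r^2) * (a*q^2 + 2*h*(q*s) + b*s^2) := by nlinarith [h2, hA]
  have hdetsq : (p*s - q*r)^2 = 1 := by rw [hdet]; norm_num
  rw [hdetsq, mul_one] at hdet2
  linarith [hdet2, hH2, hAB]

/-- A positive binary form of determinant 1 is the sum of two squares form. -/
lemma bin_det_one (a h b : ℤ)
    (hpos : ∀ x y : ℤ, ¬(x = 0 ∧ y = 0) → 0 < a*x^2 + 2*h*(x*y) + b*y^2)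
    (hdet : a*b - h^2 = 1) :
    ∃ p q r s : ℤ, ∀ X Y : ℤ,
      a*X^2 + 2*h*(X*Y) + b*Y^2 = (p*X + q*Y)^2 + (r*X + s*Y)^2 := by
  obtain ⟨p, q, r, s, hdet1, h1, h2⟩ := bin_reduce (a+b).toNat a h b hpos le_rfl
  have hpr : ¬(p = 0 ∧ r = 0) := by rintro ⟨rfl, rfl⟩; simp at hdet1
  have hA : 0 < a*p^2 + 2*h*(p*r) + b*r^2 := hpos p r hpr
  have hdet2 : (a*p^2 + 2*h*(p*r) + b*r^2) * (a*q^2 + 2*h*(q*s) + b*s^2)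
      - (a*(p*q) + h*(p*s + q*r) + b*(r*s))^2 = (a*b - h^2)*(p*s - q*r)^2 := by ring
  have hqs : ¬(q = 0 ∧ s = 0) := by rintro ⟨rfl, rfl⟩; simp at hdet1
  have hB : 0 < a*q^2 + 2*h*(q*s) + b*s^2 := hpos q s hqs
  have habs := abs_le.mp h1
  have hH2 : 4*(a*(p*q) + h*(p*s + q*r) + b*(r*s))^2 ≤ (a*p^2 + 2*h*(p*r) + b*r^2)^2 := by
    nlinarith [habs.1, habs.2]
  have hAB : (a*p^2 + 2*h*(p*r) + b*r^2)^2
      ≤ (a*p^2 + 2*h*(p*r) + b*r^2) * (a*q^2 + 2*h*(q*s) + b*s^2) := by nlinarith [h2, hA]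
  have hdetsq : (p*s - q*r)^2 = 1 := by rw [hdet1]; norm_num
  rw [hdetsq, mul_one, hdet] at hdet2
  have hbound : 3*(a*p^2 + 2*h*(p*r) + b*r^2)^2 ≤ 4 := by linarith [hdet2, hH2, hAB]
  have hA1 : a*p^2 + 2*h*(p*r) + b*r^2 = 1 := by nlinarith
  have hH0 : a*(p*q) + h*(p*s + q*r) + b*(r*s) = 0 := by
    rw [hA1] at habs; omega
  have hB1 : a*q^2 + 2*h*(q*s) + b*s^2 = 1 := by
    have h5 := hdet2
    rw [hA1, hH0] at h5
    linarith
  refine ⟨s, -q, -r, p, ?_⟩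
  intro X Y
  have key : ∀ x y : ℤ, a*(p*x + q*y)^2 + 2*h*((p*x + q*y)*(r*x + s*y)) + b*(r*x + s*y)^2
      = x^2 + y^2 := by
    intro x y
    have expand : a*(p*x + q*y)^2 + 2*h*((p*x + q*y)*(r*x + s*y)) + b*(r*x + s*y)^2
        = (a*p^2 + 2*h*(p*r) + b*r^2)*x^2
          + 2*(a*(p*q) + h*(p*s + q*r) + b*(r*s))*(x*y)
          + (a*q^2 + 2*h*(q*s) + b*s^2)*y^2 := by ring
    rw [expand, hA1, hH0, hB1]; ring
  have h3 := key (s*X - q*Y) (p*Y - r*X)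
  have e1 : p*(s*X - q*Y) + q*(p*Y - r*X) = X := by linear_combination X*hdet1
  have e2 : r*(s*X - q*Y) + s*(p*Y - r*X) = Y := by linear_combination Y*hdet1
  rw [e1, e2] at h3
  rw [h3]; ring

def Q3 (a b c d e f x y z : ℤ) : ℤ :=
  a*x^2 + b*y^2 + c*z^2 + 2*d*(x*y) + 2*e*(x*z) + 2*f*(y*z)

def P3 (a b c d e f x y z u v w : ℤ) : ℤ :=
  a*(x*u) + b*(y*v) + c*(z*w) + d*(x*v + y*u) + e*(x*w + z*u) + f*(y*w + z*v)

lemma prim_extend (x y z : ℤ) (h : Int.gcd (↑(Int.gcd x y)) z = 1) :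
    ∃ p2 p3 p5 p6 p8 p9 : ℤ,
      x*(p5*p9 - p6*p8) - y*(p2*p9 - p3*p8) + z*(p2*p6 - p3*p5) = 1 := by
  by_cases hxy : Int.gcd x y = 0
  · obtain ⟨rfl, rfl⟩ := Int.gcd_eq_zero_iff.mp hxy
    rw [hxy] at h
    have hz : z.natAbs = 1 := by simpa [Int.gcd] using h
    have hz2 : z = 1 ∨ z = -1 := Int.natAbs_eq_iff.mp hz
    rcases hz2 with rfl | rfl
    · exact ⟨1, 0, 0, 1, 0, 0, by ring⟩
    · exact ⟨1, 0, 0, -1, 0, 0, by ring⟩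
  · have hg2 : (0:ℤ) < ↑(Int.gcd x y) := by exact_mod_cast Nat.pos_of_ne_zero hxy
    set G := (↑(Int.gcd x y) : ℤ) with hG
    set α := Int.gcdA x y with hα
    set β := Int.gcdB x y with hβ
    have hbez : G = x * α + y * β := Int.gcd_eq_gcd_ab x y
    obtain ⟨x2, hx2⟩ : G ∣ x := Int.gcd_dvd_left _ _
    obtain ⟨y2, hy2⟩ : G ∣ y := Int.gcd_dvd_right _ _
    set γ := Int.gcdA G z with hγ
    set δ := Int.gcdB G z with hδ
    have hbez2 : (↑(Int.gcd G z) : ℤ) = G * γ + z * δ := Int.gcd_eq_gcd_ab G z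
    rw [h] at hbez2
    have hone : G * γ + z * δ = 1 := by exact_mod_cast hbez2.symm
    have h1 : α * x2 + β * y2 = 1 := by
      have h2 : G * (α * x2 + β * y2) = G * 1 := by
        linear_combination (-α)*hx2 + (-β)*hy2 + (-1)*hbez
      have := mul_left_cancel₀ (ne_of_gt hg2) h2
      linarith [this]
    refine ⟨-β, -δ*x2, α, -δ*y2, 0, γ, ?_⟩
    have key : x*(α*γ - (-δ*y2)*0) - y*((-β)*γ - (-δ*x2)*0) + z*((-β)*(-δ*y2) - (-δ*x2)*α)
        = γ*(x*α + y*β) + z*δ*(α*x2 + β*y2) := by ring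
    rw [key, ← hbez, h1]
    linarith [hone]

section Ternary

/-- A positive ternary integral form of determinant 1 only takes values that are
sums of three squares. -/
lemma ter_det_one (a b c d e f : ℤ)
    (hpos : ∀ x y z : ℤ, ¬(x = 0 ∧ y = 0 ∧ z = 0) → 0 < Q3 a b c d e f x y z)
    (hdet : a*(b*c) + 2*(d*(e*f)) - a*f^2 - b*e^2 - c*d^2 = 1)
    (X Y Z : ℤ) :
    ∃ u v w : ℤ, Q3 a b c d e f X Y Z = u^2 + v^2 + w^2 := by
  -- the minimum of the form
  have ha : 0 < a := by simpa [Q3] using hpos 1 0 0 (by simp)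
  have hSne : {vN : ℕ | ∃ x y z : ℤ, ¬(x = 0 ∧ y = 0 ∧ z = 0) ∧
      Q3 a b c d e f x y z = (vN : ℤ)}.Nonempty :=
    ⟨a.toNat, 1, 0, 0, by simp, by rw [Int.toNat_of_nonneg (le_of_lt ha)]; simp [Q3]⟩
  set mN := sInf {vN : ℕ | ∃ x y z : ℤ, ¬(x = 0 ∧ y = 0 ∧ z = 0) ∧
      Q3 a b c d e f x y z = (vN : ℤ)} with hmN
  obtain ⟨x0, y0, z0, hne0, hQ0⟩ := Nat.sInf_mem hSne
  set mm := (mN : ℤ) with hmmdef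
  have hminZ : ∀ x y z : ℤ, ¬(x = 0 ∧ y = 0 ∧ z = 0) → mm ≤ Q3 a b c d e f x y z := by
    intro x y z hne
    have hq := hpos x y z hne
    have hle : mN ≤ (Q3 a b c d e f x y z).toNat :=
      Nat.sInf_le ⟨x, y, z, hne, (Int.toNat_of_nonneg hq.le).symm⟩
    calc mm ≤ ((Q3 a b c d e f x y z).toNat : ℤ) := Nat.cast_le.mpr hle
    _ = Q3 a b c d e f x y z := Int.toNat_of_nonneg hq.le
  have hm1pos : 0 < mm := hQ0 ▸ hpos x0 y0 z0 hne0
  clear_value mN mm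
  -- the minimum is attained on a primitive vector
  have hprim : Int.gcd (↑(Int.gcd x0 y0)) z0 = 1 := by
    set g := Int.gcd (↑(Int.gcd x0 y0)) z0 with hgdef
    have hgne : g ≠ 0 := by
      intro h0
      obtain ⟨h1, h2⟩ := Int.gcd_eq_zero_iff.mp h0
      have : Int.gcd x0 y0 = 0 := by exact_mod_cast h1
      obtain ⟨h3, h4⟩ := Int.gcd_eq_zero_iff.mp this
      exact hne0 ⟨h3, h4, h2⟩
    obtain ⟨x1, hx1⟩ : (↑g : ℤ) ∣ x0 := dvd_trans (Int.gcd_dvd_left _ _) (Int.gcd_dvd_left _ _)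
    obtain ⟨y1, hy1⟩ : (↑g : ℤ) ∣ y0 := dvd_trans (Int.gcd_dvd_left _ _) (Int.gcd_dvd_right _ _)
    obtain ⟨z1, hz1⟩ : (↑g : ℤ) ∣ z0 := Int.gcd_dvd_right _ _
    have hgpos : (0:ℤ) < ↑g := by exact_mod_cast Nat.pos_of_ne_zero hgne
    have hne1 : ¬(x1 = 0 ∧ y1 = 0 ∧ z1 = 0) := by
      rintro ⟨rfl, rfl, rfl⟩
      exact hne0 ⟨by simpa using hx1, by simpa using hy1, by simpa using hz1⟩
    have hsplit : Q3 a b c d e f x0 y0 z0 = (↑g)^2 * Q3 a b c d e f x1 y1 z1 := by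
      rw [hx1, hy1, hz1]; simp only [Q3]; ring
    have hge : mm ≤ Q3 a b c d e f x1 y1 z1 := hminZ x1 y1 z1 hne1
    have heq : (↑g)^2 * Q3 a b c d e f x1 y1 z1 = mm := by rw [← hsplit, hQ0]
    have hQ1pos : 0 < Q3 a b c d e f x1 y1 z1 := lt_of_lt_of_le hm1pos hge
    have hg2le : (↑g:ℤ)^2 * Q3 a b c d e f x1 y1 z1 ≤ 1 * Q3 a b c d e f x1 y1 z1 := by
      rw [one_mul]; linarith
    have hg2 : (↑g:ℤ)^2 ≤ 1 := le_of_mul_le_mul_right hg2le hQ1pos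
    have hg1 : (1:ℤ) ≤ ↑g := hgpos
    have : (↑g:ℤ) = 1 := by nlinarith [hg2, hg1]
    exact_mod_cast this
  obtain ⟨p2, p3, p5, p6, p8, p9, hdetM⟩ := prim_extend x0 y0 z0 hprim
  -- transformed form
  obtain ⟨B, hB⟩ : ∃ t, t = Q3 a b c d e f p2 p5 p8 := ⟨_, rfl⟩
  obtain ⟨C, hC⟩ : ∃ t, t = Q3 a b c d e f p3 p6 p9 := ⟨_, rfl⟩
  obtain ⟨D, hD⟩ : ∃ t, t = P3 a b c d e f x0 y0 z0 p2 p5 p8 := ⟨_, rfl⟩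
  obtain ⟨E, hE⟩ : ∃ t, t = P3 a b c d e f x0 y0 z0 p3 p6 p9 := ⟨_, rfl⟩
  obtain ⟨F, hF⟩ : ∃ t, t = P3 a b c d e f p2 p5 p8 p3 p6 p9 := ⟨_, rfl⟩
  have hAm : Q3 a b c d e f x0 y0 z0 = mm := hQ0
  have I1 : ∀ u v w : ℤ,
      Q3 a b c d e f (x0*u + p2*v + p3*w) (y0*u + p5*v + p6*w) (z0*u + p8*v + p9*w)
      = mm*u^2 + B*v^2 + C*w^2 + 2*D*(u*v) + 2*E*(u*w) + 2*F*(v*w) := by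
    intro u v w
    rw [hB, hC, hD, hE, hF, ← hAm]
    simp only [Q3, P3]; ring
  have I2 : mm*(B*C) + 2*(D*(E*F)) - mm*F^2 - B*E^2 - C*D^2 = 1 := by
    have I2' : (Q3 a b c d e f x0 y0 z0)*((Q3 a b c d e f p2 p5 p8)*(Q3 a b c d e f p3 p6 p9))
        + 2*((P3 a b c d e f x0 y0 z0 p2 p5 p8)*((P3 a b c d e f x0 y0 z0 p3 p6 p9)*(P3 a b c d e f p2 p5 p8 p3 p6 p9)))
        - (Q3 a b c d e f x0 y0 z0)*(P3 a b c d e f p2 p5 p8 p3 p6 p9)^2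
        - (Q3 a b c d e f p2 p5 p8)*(P3 a b c d e f x0 y0 z0 p3 p6 p9)^2
        - (Q3 a b c d e f p3 p6 p9)*(P3 a b c d e f x0 y0 z0 p2 p5 p8)^2
        = (a*(b*c) + 2*(d*(e*f)) - a*f^2 - b*e^2 - c*d^2) *
          (x0*(p5*p9 - p6*p8) - y0*(p2*p9 - p3*p8) + z0*(p2*p6 - p3*p5))^2 := by
      simp only [Q3, P3]; ring
    rw [hdet, hdetM] at I2'
    rw [hB, hC, hD, hE, hF, ← hAm]
    simpa using I2'
  -- nonzero vectors stay nonzero under the transformation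
  have hinj : ∀ u v w : ℤ, ¬(u = 0 ∧ v = 0 ∧ w = 0) →
      ¬(x0*u + p2*v + p3*w = 0 ∧ y0*u + p5*v + p6*w = 0 ∧ z0*u + p8*v + p9*w = 0) := by
    intro u v w huvw ⟨h1, h2, h3⟩
    apply huvw
    refine ⟨?_, ?_, ?_⟩
    · have e1 : (p5*p9 - p6*p8)*(x0*u + p2*v + p3*w) - (p2*p9 - p3*p8)*(y0*u + p5*v + p6*w)
          + (p2*p6 - p3*p5)*(z0*u + p8*v + p9*w)
          = (x0*(p5*p9 - p6*p8) - y0*(p2*p9 - p3*p8) + z0*(p2*p6 - p3*p5))*u := by ring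
      rw [h1, h2, h3, hdetM] at e1; simpa using e1.symm
    · have e1 : -(y0*p9 - p6*z0)*(x0*u + p2*v + p3*w) + (x0*p9 - p3*z0)*(y0*u + p5*v + p6*w)
          - (x0*p6 - p3*y0)*(z0*u + p8*v + p9*w)
          = (x0*(p5*p9 - p6*p8) - y0*(p2*p9 - p3*p8) + z0*(p2*p6 - p3*p5))*v := by ring
      rw [h1, h2, h3, hdetM] at e1; simpa using e1.symm
    · have e1 : (y0*p8 - p5*z0)*(x0*u + p2*v + p3*w) - (x0*p8 - p2*z0)*(y0*u + p5*v + p6*w)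
          + (x0*p5 - p2*y0)*(z0*u + p8*v + p9*w)
          = (x0*(p5*p9 - p6*p8) - y0*(p2*p9 - p3*p8) + z0*(p2*p6 - p3*p5))*w := by ring
      rw [h1, h2, h3, hdetM] at e1; simpa using e1.symm
  have hmin' : ∀ u v w : ℤ, ¬(u = 0 ∧ v = 0 ∧ w = 0) →
      mm ≤ mm*u^2 + B*v^2 + C*w^2 + 2*D*(u*v) + 2*E*(u*w) + 2*F*(v*w) := by
    intro u v w huvw
    rw [← I1]
    exact hminZ _ _ _ (hinj u v w huvw)
  -- the binary complement is positive
  have hHpos : ∀ v w : ℤ, ¬(v = 0 ∧ w = 0) →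
      0 < (mm*B - D^2)*v^2 + 2*(mm*F - D*E)*(v*w) + (mm*C - E^2)*w^2 := by
    intro v w hvw
    obtain ⟨k, hk⟩ := round_exists (D*v + E*w) mm hm1pos
    set s := D*v + E*w + mm*k with hs
    clear_value s
    have e1 : mm*(mm*k^2 + B*v^2 + C*w^2 + 2*D*(k*v) + 2*E*(k*w) + 2*F*(v*w))
        = s^2 + ((mm*B - D^2)*v^2 + 2*(mm*F - D*E)*(v*w) + (mm*C - E^2)*w^2) := by
      rw [hs]; ring
    have e2 : mm ≤ mm*k^2 + B*v^2 + C*w^2 + 2*D*(k*v) + 2*E*(k*w) + 2*F*(v*w) :=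
      hmin' k v w (by rintro ⟨_, rfl, rfl⟩; exact hvw ⟨rfl, rfl⟩)
    have e3 : mm*mm ≤ mm*(mm*k^2 + B*v^2 + C*w^2 + 2*D*(k*v) + 2*E*(k*w) + 2*F*(v*w)) :=
      mul_le_mul_of_nonneg_left e2 hm1pos.le
    have habs := abs_le.mp hk
    have hsq : 4*s^2 ≤ mm^2 := by nlinarith only [habs.1, habs.2]
    have hmm2 : 0 < mm*mm := mul_pos hm1pos hm1pos
    nlinarith only [e1, e3, hsq, hmm2]
  -- the minimum is 1
  obtain ⟨vv, hv0, hvb, yv, zv, hyz0, hval⟩ := bin_value_bound _ _ _ hHpos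
  have hdH : (mm*B - D^2)*(mm*C - E^2) - (mm*F - D*E)^2 = mm := by
    have : (mm*B - D^2)*(mm*C - E^2) - (mm*F - D*E)^2
        = mm*(mm*(B*C) + 2*(D*(E*F)) - mm*F^2 - B*E^2 - C*D^2) := by ring
    rw [this, I2, mul_one]
  rw [hdH] at hvb
  have hmm1 : mm = 1 := by
    obtain ⟨k, hk⟩ := round_exists (D*yv + E*zv) mm hm1pos
    set s := D*yv + E*zv + mm*k with hs
    clear_value s
    have e1 : mm*(mm*k^2 + B*yv^2 + C*zv^2 + 2*D*(k*yv) + 2*E*(k*zv) + 2*F*(yv*zv))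
        = s^2 + ((mm*B - D^2)*yv^2 + 2*(mm*F - D*E)*(yv*zv) + (mm*C - E^2)*zv^2) := by
      rw [hs]; ring
    rw [hval] at e1
    have e2 : mm ≤ mm*k^2 + B*yv^2 + C*zv^2 + 2*D*(k*yv) + 2*E*(k*zv) + 2*F*(yv*zv) :=
      hmin' k yv zv (by rintro ⟨_, rfl, rfl⟩; exact hyz0 ⟨rfl, rfl⟩)
    have e3 : mm*mm ≤ mm*(mm*k^2 + B*yv^2 + C*zv^2 + 2*D*(k*yv) + 2*E*(k*zv) + 2*F*(yv*zv)) :=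
      mul_le_mul_of_nonneg_left e2 hm1pos.le
    have habs := abs_le.mp hk
    have hsq : 4*s^2 ≤ mm^2 := by nlinarith only [habs.1, habs.2]
    have h3m : 3*(mm*mm) ≤ 4*vv := by nlinarith only [e1, e3, hsq]
    have hv1 : (1:ℤ) ≤ vv := hv0
    have s1 : 3*(mm*mm) * (3*vv) ≤ 4*vv*(3*vv) :=
      mul_le_mul_of_nonneg_right h3m (by linarith)
    have s2 : 12*(vv*vv) ≤ 16*mm := by nlinarith only [hvb]
    have s3 : mm*(9*(mm*vv)) ≤ mm*16 := by nlinarith only [s1, s2]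
    have s4 : 9*(mm*vv) ≤ 16 := le_of_mul_le_mul_left s3 hm1pos
    have s5 : mm ≤ mm*vv := le_mul_of_one_le_right (le_of_lt hm1pos) hv1
    have s6 : mm ≤ 1 := by nlinarith only [s4, s5]
    omega
  -- split off a square and finish with the binary theorem
  obtain ⟨pp, qq, rr, ss, hbin⟩ := bin_det_one (mm*B - D^2) (mm*F - D*E) (mm*C - E^2) hHpos
    (by rw [hdH, hmm1])
  -- express the target value in the new coordinates
  set t1 := (p5*p9 - p6*p8)*X - (p2*p9 - p3*p8)*Y + (p2*p6 - p3*p5)*Z with ht1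
  set t2 := -(y0*p9 - p6*z0)*X + (x0*p9 - p3*z0)*Y - (x0*p6 - p3*y0)*Z with ht2
  set t3 := (y0*p8 - p5*z0)*X - (x0*p8 - p2*z0)*Y + (x0*p5 - p2*y0)*Z with ht3
  have c1 : x0*t1 + p2*t2 + p3*t3 = X := by
    rw [ht1, ht2, ht3]
    have : x0*((p5*p9 - p6*p8)*X - (p2*p9 - p3*p8)*Y + (p2*p6 - p3*p5)*Z)
        + p2*(-(y0*p9 - p6*z0)*X + (x0*p9 - p3*z0)*Y - (x0*p6 - p3*y0)*Z)
        + p3*((y0*p8 - p5*z0)*X - (x0*p8 - p2*z0)*Y + (x0*p5 - p2*y0)*Z)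
        = (x0*(p5*p9 - p6*p8) - y0*(p2*p9 - p3*p8) + z0*(p2*p6 - p3*p5))*X := by ring
    rw [this, hdetM]; ring
  have c2 : y0*t1 + p5*t2 + p6*t3 = Y := by
    rw [ht1, ht2, ht3]
    have : y0*((p5*p9 - p6*p8)*X - (p2*p9 - p3*p8)*Y + (p2*p6 - p3*p5)*Z)
        + p5*(-(y0*p9 - p6*z0)*X + (x0*p9 - p3*z0)*Y - (x0*p6 - p3*y0)*Z)
        + p6*((y0*p8 - p5*z0)*X - (x0*p8 - p2*z0)*Y + (x0*p5 - p2*y0)*Z)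
        = (x0*(p5*p9 - p6*p8) - y0*(p2*p9 - p3*p8) + z0*(p2*p6 - p3*p5))*Y := by ring
    rw [this, hdetM]; ring
  have c3 : z0*t1 + p8*t2 + p9*t3 = Z := by
    rw [ht1, ht2, ht3]
    have : z0*((p5*p9 - p6*p8)*X - (p2*p9 - p3*p8)*Y + (p2*p6 - p3*p5)*Z)
        + p8*(-(y0*p9 - p6*z0)*X + (x0*p9 - p3*z0)*Y - (x0*p6 - p3*y0)*Z)
        + p9*((y0*p8 - p5*z0)*X - (x0*p8 - p2*z0)*Y + (x0*p5 - p2*y0)*Z)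
        = (x0*(p5*p9 - p6*p8) - y0*(p2*p9 - p3*p8) + z0*(p2*p6 - p3*p5))*Z := by ring
    rw [this, hdetM]; ring
  have hXYZ : Q3 a b c d e f X Y Z
      = mm*t1^2 + B*t2^2 + C*t3^2 + 2*D*(t1*t2) + 2*E*(t1*t3) + 2*F*(t2*t3) := by
    rw [← c1, ← c2, ← c3]
    exact I1 t1 t2 t3
  have hsq : mm*t1^2 + B*t2^2 + C*t3^2 + 2*D*(t1*t2) + 2*E*(t1*t3) + 2*F*(t2*t3)
      = (t1 + D*t2 + E*t3)^2
        + ((mm*B - D^2)*t2^2 + 2*(mm*F - D*E)*(t2*t3) + (mm*C - E^2)*t3^2) := by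
    rw [hmm1]; ring
  refine ⟨t1 + D*t2 + E*t3, pp*t2 + qq*t3, rr*t2 + ss*t3, ?_⟩
  rw [hXYZ, hsq, hbin t2 t3]; ring

end Ternary

open NumberTheorySymbols jacobiSym in
/-- Three squares theorem for `N ≡ 5 (mod 8)`, via Dirichlet's theorem. -/
lemma three_squares_five_mod_eight (N : ℕ) (h5 : N % 8 = 5) :
    ∃ x y z : ℤ, (N:ℤ) = x^2 + y^2 + z^2 := by
  have hN5 : 5 ≤ N := by omega
  have hNodd : N % 2 = 1 := by omega
  have hN4 : N % 4 = 1 := by omega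
  haveI : NeZero (4*N) := ⟨by omega⟩
  -- a suitable prime p ≡ -1 mod N, p ≡ 1 mod 4
  have hu : IsUnit ((2*N - 1 : ℕ) : ZMod (4*N)) := by
    rw [ZMod.isUnit_iff_coprime]
    have c2 : Nat.Coprime (2*N - 1) 2 :=
      Nat.coprime_two_right.mpr (Nat.odd_iff.mpr (by omega))
    have c4 : Nat.Coprime (2*N - 1) 4 := by
      have := c2.pow_right 2
      simpa [show (2:ℕ)^2 = 4 by norm_num] using this
    have cN : Nat.Coprime (2*N - 1) N := by
      have d1 : Nat.gcd (2*N - 1) N ∣ 2*N - 1 := Nat.gcd_dvd_left _ _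
      have d2 : Nat.gcd (2*N - 1) N ∣ 2*N := Dvd.dvd.mul_left (Nat.gcd_dvd_right _ _) 2
      have hd := Nat.dvd_sub d2 d1
      rw [show 2*N - (2*N - 1) = 1 by omega] at hd
      exact Nat.dvd_one.mp hd
    exact Nat.Coprime.mul_right c4 cN
  obtain ⟨p, hpgt, hpp, hpmod⟩ :=
    Nat.forall_exists_prime_gt_and_eq_mod (q := 4*N) (a := ((2*N - 1 : ℕ) : ZMod (4*N))) hu (4*N)
  haveI : Fact p.Prime := ⟨hpp⟩
  have hmodEq : p ≡ 2*N - 1 [MOD 4*N] := (ZMod.natCast_eq_natCast_iff _ _ _).mp hpmod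
  obtain ⟨t, ht⟩ := hmodEq.dvd
  have hc : ((2*N - 1 : ℕ) : ℤ) = 2*(N:ℤ) - 1 := by omega
  rw [hc] at ht
  push_cast at ht
  -- ht : 2*N - 1 - p = 4*N*t
  obtain ⟨w, hw⟩ : ∃ w : ℤ, (p:ℤ) = 2*(N:ℤ) - 1 - 4*w := ⟨(N:ℤ)*t, by linarith [ht]⟩
  have hp4 : p % 4 = 1 := by omega
  have hpodd : Odd p := by rw [Nat.odd_iff]; omega
  set NZ : ℤ := (N : ℤ) with hNZ
  set PZ : ℤ := (p : ℤ) with hPZ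
  obtain ⟨QZ, hPQ⟩ : ∃ qz : ℤ, PZ = NZ*qz - 1 := ⟨2 - 4*t, by rw [hPZ, hNZ]; linarith [ht]⟩
  -- (-N) is a square mod p
  have hNne : ((N:ℤ) : ZMod p) ≠ 0 := by
    rw [Ne, ZMod.intCast_zmod_eq_zero_iff_dvd]
    intro hdvd
    have h1 : (p:ℤ) ≤ (N:ℤ) := Int.le_of_dvd (by exact_mod_cast (by omega : 0 < N)) hdvd
    have h1' : p ≤ N := by exact_mod_cast h1
    omega
  have hsq : IsSquare ((-(N:ℤ) : ℤ) : ZMod p) := by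
    have hne' : ((-(N:ℤ) : ℤ) : ZMod p) ≠ 0 := by
      rw [Int.cast_neg]; exact neg_ne_zero.mpr hNne
    rw [← legendreSym.eq_one_iff p hne', legendreSym.to_jacobiSym]
    rw [show (-(N:ℤ)) = (-1) * (N:ℤ) by ring, jacobiSym.mul_left,
      jacobiSym.at_neg_one hpodd, ZMod.χ₄_nat_one_mod_four hp4]
    have e2 : J((N:ℤ) | p) = J((p:ℤ) | N) :=
      jacobiSym.quadratic_reciprocity_one_mod_four hN4 hpodd
    have e3 : J((p:ℤ) | N) = J(-1 | N) := by
      apply jacobiSym.mod_left'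
      have h4 : (p:ℤ) = -1 + (N:ℤ)*QZ := by rw [← hNZ, ← hPZ]; linarith [hPQ]
      rw [h4, Int.add_mul_emod_self_left]
    rw [e2, e3, jacobiSym.at_neg_one (Nat.odd_iff.mpr hNodd), ZMod.χ₄_nat_one_mod_four hN4]
    norm_num
  obtain ⟨yy, hyy⟩ := hsq
  have hdvd2 : (p:ℤ) ∣ (yy.val:ℤ)^2 + N := by
    rw [← ZMod.intCast_zmod_eq_zero_iff_dvd]
    have hy2 : ((yy.val:ℕ) : ZMod p) = yy := by rw [ZMod.natCast_val, ZMod.cast_id]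
    push_cast
    rw [hy2]
    rw [Int.cast_neg] at hyy
    push_cast at hyy
    rw [sq]
    linear_combination -hyy
  obtain ⟨k, hPk⟩ := hdvd2
  set h : ℤ := (yy.val : ℤ) with hh
  have hPk' : h^2 + NZ = PZ * k := hPk
  set β : ℤ := h * QZ with hβ
  set c22 : ℤ := QZ^2*k - QZ with hc22def
  have hc22 : PZ * c22 = β^2 + QZ := by
    rw [hc22def, hβ]
    linear_combination (-QZ^2) * hPk' + (-QZ) * hPQ
  have hNZ5 : 5 ≤ NZ := by rw [hNZ]; exact_mod_cast hN5
  have hPZpos : 0 < PZ := by rw [hPZ]; exact_mod_cast hpp.pos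
  clear_value NZ PZ h β c22
  obtain ⟨L, hLdef⟩ : ∃ t : ℤ, t = NZ*c22 - 1 := ⟨_, rfl⟩
  have hL : PZ * L = NZ*β^2 + 1 := by rw [hLdef]; linear_combination NZ*hc22 - hPQ
  have hLpos : 0 < L := by
    rcases le_or_gt L 0 with hcL | hcL
    · exfalso
      have h1 : PZ*L ≤ PZ*0 := mul_le_mul_of_nonneg_left hcL hPZpos.le
      rw [mul_zero] at h1
      have h2 : 0 ≤ NZ*β^2 := mul_nonneg (by linarith) (sq_nonneg _)
      linarith
    · exact hcL
  have hdet' : NZ*(c22*PZ) + 2*(1*(0*(-β))) - NZ*(-β)^2 - c22*0^2 - PZ*1^2 = 1 := by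
    linear_combination NZ*hc22 - hPQ
  have hpos' : ∀ x y z : ℤ, ¬(x = 0 ∧ y = 0 ∧ z = 0) →
      0 < Q3 NZ c22 PZ 1 0 (-β) x y z := by
    intro x y z hxyz
    have id3 : L*(NZ*(Q3 NZ c22 PZ 1 0 (-β) x y z))
        = L*(NZ*x + y)^2 + ((L*y - NZ*β*z)^2 + NZ*z^2) := by
      simp only [Q3]
      linear_combination (NZ*z^2) * hL + (-(L*y^2)) * hLdef
    by_contra h0
    push_neg at h0
    have q1 : 0 ≤ L*(NZ*x + y)^2 := mul_nonneg hLpos.le (sq_nonneg _)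
    have q2 : 0 ≤ (L*y - NZ*β*z)^2 := sq_nonneg _
    have q3 : 0 ≤ NZ*z^2 := mul_nonneg (by linarith) (sq_nonneg _)
    have hQn : NZ*(Q3 NZ c22 PZ 1 0 (-β) x y z) ≤ NZ*0 :=
      mul_le_mul_of_nonneg_left h0 (by linarith)
    rw [mul_zero] at hQn
    have hLQn : L*(NZ*(Q3 NZ c22 PZ 1 0 (-β) x y z)) ≤ L*0 :=
      mul_le_mul_of_nonneg_left hQn hLpos.le
    rw [mul_zero] at hLQn
    have e0 : L*(NZ*x + y)^2 + ((L*y - NZ*β*z)^2 + NZ*z^2) ≤ 0 := by rw [← id3]; exact hLQn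
    have hz0 : z = 0 := by
      have h1 : NZ*z^2 = 0 := le_antisymm (by linarith) q3
      have h2 : z^2 = 0 := by
        rcases mul_eq_zero.mp h1 with h3 | h3
        · exfalso; linarith
        · exact h3
      exact pow_eq_zero_iff two_ne_zero |>.mp h2
    have hy0 : y = 0 := by
      have h1 : (L*y - NZ*β*z)^2 = 0 := le_antisymm (by linarith) q2
      rw [hz0] at h1
      have h2 : L*y - NZ*β*0 = 0 := pow_eq_zero_iff two_ne_zero |>.mp h1
      rw [mul_zero, sub_zero] at h2
      rcases mul_eq_zero.mp h2 with h3 | h3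
      · exfalso; exact absurd h3 hLpos.ne'
      · exact h3
    have hx0 : x = 0 := by
      have h1 : L*(NZ*x + y)^2 = 0 := le_antisymm (by linarith) q1
      rcases mul_eq_zero.mp h1 with h3 | h3
      · exact absurd h3 hLpos.ne'
      · have h4 : NZ*x + y = 0 := pow_eq_zero_iff two_ne_zero |>.mp h3
        rw [hy0, add_zero] at h4
        rcases mul_eq_zero.mp h4 with h5 | h5
        · exfalso; linarith
        · exact h5
    exact hxyz ⟨hx0, hy0, hz0⟩
  obtain ⟨u, v, w2, huvw⟩ := ter_det_one NZ c22 PZ 1 0 (-β) hpos' hdet' 1 0 0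
  refine ⟨u, v, w2, ?_⟩
  rw [← huvw]
  simp only [Q3]; ring

/-! ### Elementary parity helpers -/

lemma sq8_odd (x : ℤ) (h : x % 2 = 1) : ∃ u, x^2 = 8*u + 1 := by
  obtain ⟨k, hk⟩ : ∃ k, x = 2*k + 1 := ⟨(x-1)/2, by omega⟩
  obtain ⟨j, hj⟩ : Even (k*(k+1)) := Int.even_mul_succ_self k
  exact ⟨j, by linear_combination (x + 2*k + 1)*hk + 4*hj⟩

lemma sq4_even (x : ℤ) (h : x % 2 = 0) : ∃ u, x^2 = 4*u := by
  obtain ⟨k, hk⟩ : ∃ k, x = 2*k := ⟨x/2, by omega⟩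
  exact ⟨k^2, by rw [hk]; ring⟩

lemma sq8_even (x : ℤ) (h : x % 2 = 0) :
    ∃ u, (x^2 = 8*u ∧ x % 4 = 0) ∨ (x^2 = 8*u + 4 ∧ x % 4 = 2) := by
  obtain ⟨k, hk⟩ : ∃ k, x = 2*k := ⟨x/2, by omega⟩
  rcases Int.emod_two_eq k with h2 | h2
  · obtain ⟨j, hj⟩ : ∃ j, k = 2*j := ⟨k/2, by omega⟩
    exact ⟨2*j^2, Or.inl ⟨by rw [hk, hj]; ring, by omega⟩⟩
  · obtain ⟨j, hj⟩ : ∃ j, k = 2*j + 1 := ⟨(k-1)/2, by omega⟩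
    exact ⟨2*(j^2+j), Or.inr ⟨by rw [hk, hj]; ring, by omega⟩⟩

lemma pick_pair (A B C D : ℤ) (h4 : (A^2+B^2+C^2+D^2) % 4 ≠ 0) :
    ∃ p q s t : ℤ, p^2+q^2+s^2+t^2 = A^2+B^2+C^2+D^2 ∧ p % 2 = 0 ∧ s % 2 = t % 2 := by
  rcases Int.emod_two_eq A with hA | hA <;> rcases Int.emod_two_eq B with hB | hB <;>
    rcases Int.emod_two_eq C with hC | hC <;> rcases Int.emod_two_eq D with hD | hD
  · exact ⟨A, B, C, D, by ring, hA, by omega⟩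
  · exact ⟨A, D, B, C, by ring, hA, by omega⟩
  · exact ⟨A, C, B, D, by ring, hA, by omega⟩
  · exact ⟨A, B, C, D, by ring, hA, by omega⟩
  · exact ⟨A, B, C, D, by ring, hA, by omega⟩
  · exact ⟨A, C, B, D, by ring, hA, by omega⟩
  · exact ⟨A, D, B, C, by ring, hA, by omega⟩
  · exact ⟨A, B, C, D, by ring, hA, by omega⟩
  · exact ⟨B, A, C, D, by ring, hB, by omega⟩
  · exact ⟨B, C, A, D, by ring, hB, by omega⟩
  · exact ⟨B, D, A, C, by ring, hB, by omega⟩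
  · exact ⟨B, A, C, D, by ring, hB, by omega⟩
  · exact ⟨C, D, A, B, by ring, hC, by omega⟩
  · exact ⟨C, B, A, D, by ring, hC, by omega⟩
  · exact ⟨D, C, A, B, by ring, hD, by omega⟩
  · exfalso
    obtain ⟨uA, hA2⟩ := sq8_odd A hA
    obtain ⟨uB, hB2⟩ := sq8_odd B hB
    obtain ⟨uC, hC2⟩ := sq8_odd C hC
    obtain ⟨uD, hD2⟩ := sq8_odd D hD
    rw [hA2, hB2, hC2, hD2] at h4
    omega

lemma pick_three_odd (A B C D : ℤ) (h4 : (A^2+B^2+C^2+D^2) % 4 = 3) :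
    ∃ a b c d : ℤ, a^2+b^2+c^2+d^2 = A^2+B^2+C^2+D^2 ∧
      a % 2 = 1 ∧ b % 2 = 1 ∧ c % 2 = 1 ∧ d % 2 = 0 := by
  have key : ∀ x : ℤ, ∃ u, (x % 2 = 1 ∧ x^2 = 4*u + 1) ∨ (x % 2 = 0 ∧ x^2 = 4*u) := by
    intro x
    rcases Int.emod_two_eq x with hx | hx
    · obtain ⟨u, hu⟩ := sq4_even x hx; exact ⟨u, Or.inr ⟨hx, hu⟩⟩
    · obtain ⟨u, hu⟩ := sq8_odd x hx; exact ⟨2*u, Or.inl ⟨hx, by omega⟩⟩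
  obtain ⟨uA, hA⟩ := key A
  obtain ⟨uB, hB⟩ := key B
  obtain ⟨uC, hC⟩ := key C
  obtain ⟨uD, hD⟩ := key D
  rcases hA with ⟨hA1, hA2⟩ | ⟨hA1, hA2⟩ <;> rcases hB with ⟨hB1, hB2⟩ | ⟨hB1, hB2⟩ <;>
    rcases hC with ⟨hC1, hC2⟩ | ⟨hC1, hC2⟩ <;> rcases hD with ⟨hD1, hD2⟩ | ⟨hD1, hD2⟩
  · exfalso; rw [hA2, hB2, hC2, hD2] at h4; omega
  · exact ⟨A, B, C, D, by ring, hA1, hB1, hC1, hD1⟩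
  · exact ⟨A, B, D, C, by ring, hA1, hB1, hD1, hC1⟩
  · exfalso; rw [hA2, hB2, hC2, hD2] at h4; omega
  · exact ⟨A, C, D, B, by ring, hA1, hC1, hD1, hB1⟩
  · exfalso; rw [hA2, hB2, hC2, hD2] at h4; omega
  · exfalso; rw [hA2, hB2, hC2, hD2] at h4; omega
  · exfalso; rw [hA2, hB2, hC2, hD2] at h4; omega
  · exact ⟨B, C, D, A, by ring, hB1, hC1, hD1, hA1⟩
  · exfalso; rw [hA2, hB2, hC2, hD2] at h4; omega
  · exfalso; rw [hA2, hB2, hC2, hD2] at h4; omega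
  · exfalso; rw [hA2, hB2, hC2, hD2] at h4; omega
  · exfalso; rw [hA2, hB2, hC2, hD2] at h4; omega
  · exfalso; rw [hA2, hB2, hC2, hD2] at h4; omega
  · exfalso; rw [hA2, hB2, hC2, hD2] at h4; omega
  · exfalso; rw [hA2, hB2, hC2, hD2] at h4; omega

lemma pick_one_odd3 (x y z : ℤ) (h8 : (x^2+y^2+z^2) % 8 = 5) :
    ∃ a s t : ℤ, a^2+s^2+t^2 = x^2+y^2+z^2 ∧ a % 2 = 1 ∧ s % 2 = 0 ∧ t % 2 = 0 ∧
      (s+t) % 4 = 2 := by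
  have h4 : (x^2+y^2+z^2) % 4 = 1 := by omega
  rcases Int.emod_two_eq x with hx | hx <;> rcases Int.emod_two_eq y with hy | hy <;>
    rcases Int.emod_two_eq z with hz | hz
  · exfalso
    obtain ⟨ux, hx2⟩ := sq4_even x hx
    obtain ⟨uy, hy2⟩ := sq4_even y hy
    obtain ⟨uz, hz2⟩ := sq4_even z hz
    rw [hx2, hy2, hz2] at h4; omega
  · refine ⟨z, x, y, by ring, hz, hx, hy, ?_⟩
    obtain ⟨uz, hz2⟩ := sq8_odd z hz
    obtain ⟨ux, hx2⟩ := sq8_even x hx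
    obtain ⟨uy, hy2⟩ := sq8_even y hy
    rcases hx2 with ⟨hx2, hx4⟩ | ⟨hx2, hx4⟩ <;> rcases hy2 with ⟨hy2, hy4⟩ | ⟨hy2, hy4⟩ <;>
      rw [hx2, hy2, hz2] at h8 <;> omega
  · refine ⟨y, x, z, by ring, hy, hx, hz, ?_⟩
    obtain ⟨uy, hy2⟩ := sq8_odd y hy
    obtain ⟨ux, hx2⟩ := sq8_even x hx
    obtain ⟨uz, hz2⟩ := sq8_even z hz
    rcases hx2 with ⟨hx2, hx4⟩ | ⟨hx2, hx4⟩ <;> rcases hz2 with ⟨hz2, hz4⟩ | ⟨hz2, hz4⟩ <;>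
      rw [hx2, hy2, hz2] at h8 <;> omega
  · exfalso
    obtain ⟨uy, hy2⟩ := sq8_odd y hy
    obtain ⟨uz, hz2⟩ := sq8_odd z hz
    obtain ⟨ux, hx2⟩ := sq4_even x hx
    rw [hx2, hy2, hz2] at h4; omega
  · refine ⟨x, y, z, by ring, hx, hy, hz, ?_⟩
    obtain ⟨ux, hx2⟩ := sq8_odd x hx
    obtain ⟨uy, hy2⟩ := sq8_even y hy
    obtain ⟨uz, hz2⟩ := sq8_even z hz
    rcases hy2 with ⟨hy2, hy4⟩ | ⟨hy2, hy4⟩ <;> rcases hz2 with ⟨hz2, hz4⟩ | ⟨hz2, hz4⟩ <;>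
      rw [hx2, hy2, hz2] at h8 <;> omega
  · exfalso
    obtain ⟨ux, hx2⟩ := sq8_odd x hx
    obtain ⟨uz, hz2⟩ := sq8_odd z hz
    obtain ⟨uy, hy2⟩ := sq4_even y hy
    rw [hx2, hy2, hz2] at h4; omega
  · exfalso
    obtain ⟨ux, hx2⟩ := sq8_odd x hx
    obtain ⟨uy, hy2⟩ := sq8_odd y hy
    obtain ⟨uz, hz2⟩ := sq4_even z hz
    rw [hx2, hy2, hz2] at h4; omega
  · exfalso
    obtain ⟨ux, hx2⟩ := sq8_odd x hx
    obtain ⟨uy, hy2⟩ := sq8_odd y hy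
    obtain ⟨uz, hz2⟩ := sq8_odd z hz
    rw [hx2, hy2, hz2] at h8; omega

theorem q1_represents_all_integers_gt_one :
    ∀ n : ℤ, 1 < n → ∃ w x y z : ℤ,
      2 * w ^ 2 + 3 * x ^ 2 + 3 * y ^ 2 + 4 * z ^ 2 + 2 * x * y = n := by
  intro n hn
  suffices hs : ∃ u v w z : ℤ, (u + v) % 2 = 0 ∧ v^2 + 2*u^2 + 2*w^2 + 4*z^2 = n by
    obtain ⟨u, v, w, z, hpar, heq⟩ := hs
    obtain ⟨X, hX⟩ : ∃ X, u + v = 2*X := ⟨(u+v)/2, by omega⟩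
    obtain ⟨Y, hY⟩ : ∃ Y, u - v = 2*Y := ⟨(u-v)/2, by omega⟩
    refine ⟨w, X, Y, z, ?_⟩
    have hu : u = X + Y := by omega
    have hv : v = X - Y := by omega
    rw [hu, hv] at heq
    linear_combination heq
  by_cases he : n % 2 = 0
  · -- n even
    obtain ⟨m, hm⟩ : ∃ m, n = 2*m := ⟨n/2, by omega⟩
    have hm1 : 1 ≤ m := by omega
    by_cases h4m : m % 4 = 0
    · obtain ⟨m', hm'⟩ : ∃ m', m = 4*m' := ⟨m/4, by omega⟩
      have hm'0 : (0:ℤ) ≤ m' := by omega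
      obtain ⟨A, B, C, D, hABCD⟩ := Nat.sum_four_squares m'.toNat
      have hZ : (A:ℤ)^2 + (B:ℤ)^2 + (C:ℤ)^2 + (D:ℤ)^2 = m' := by
        have h1 := congrArg (fun k : ℕ => (k : ℤ)) hABCD
        push_cast at h1
        rwa [Int.toNat_of_nonneg hm'0] at h1
      exact ⟨2*(A:ℤ), 2*(C:ℤ) + 2*(D:ℤ), 2*(B:ℤ), (C:ℤ) - (D:ℤ), by omega,
        by linear_combination 8*hZ - 2*hm' - hm⟩
    · have hm0 : (0:ℤ) ≤ m := by omega
      obtain ⟨A, B, C, D, hABCD⟩ := Nat.sum_four_squares m.toNat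
      have hZ : (A:ℤ)^2 + (B:ℤ)^2 + (C:ℤ)^2 + (D:ℤ)^2 = m := by
        have h1 := congrArg (fun k : ℕ => (k : ℤ)) hABCD
        push_cast at h1
        rwa [Int.toNat_of_nonneg hm0] at h1
      have h4' : ((A:ℤ)^2+(B:ℤ)^2+(C:ℤ)^2+(D:ℤ)^2) % 4 ≠ 0 := by rw [hZ]; omega
      obtain ⟨p, q, s, t, hperm, hp2, hst⟩ := pick_pair (A:ℤ) (B:ℤ) (C:ℤ) (D:ℤ) h4'
      obtain ⟨z, hz⟩ : ∃ z, s - t = 2*z := ⟨(s-t)/2, by omega⟩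
      refine ⟨p, s + t, q, z, by omega, ?_⟩
      linear_combination 2*hperm + 2*hZ - hm - (s - t + 2*z)*hz
  · -- n odd
    by_cases h43 : n % 4 = 3
    · have hn0 : (0:ℤ) ≤ n := by omega
      obtain ⟨A, B, C, D, hABCD⟩ := Nat.sum_four_squares n.toNat
      have hZ : (A:ℤ)^2 + (B:ℤ)^2 + (C:ℤ)^2 + (D:ℤ)^2 = n := by
        have h1 := congrArg (fun k : ℕ => (k : ℤ)) hABCD
        push_cast at h1
        rwa [Int.toNat_of_nonneg hn0] at h1
      have h4' : ((A:ℤ)^2+(B:ℤ)^2+(C:ℤ)^2+(D:ℤ)^2) % 4 = 3 := by rw [hZ]; omega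
      obtain ⟨a, b, c, d, hperm, ha, hb, hc, hd⟩ := pick_three_odd (A:ℤ) (B:ℤ) (C:ℤ) (D:ℤ) h4'
      obtain ⟨P, hP⟩ : ∃ P, a + b = 2*P := ⟨(a+b)/2, by omega⟩
      obtain ⟨Q, hQ⟩ : ∃ Q, a - b = 2*Q := ⟨(a-b)/2, by omega⟩
      obtain ⟨zz, hzz⟩ : ∃ zz, d = 2*zz := ⟨d/2, by omega⟩
      have ha2 : a = P + Q := by omega
      have hb2 : b = P - Q := by omega
      rw [ha2, hb2, hzz] at hperm
      by_cases hPodd : P % 2 = 1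
      · exact ⟨P, c, Q, zz, by omega, by linear_combination hperm + hZ⟩
      · have hQodd : Q % 2 = 1 := by omega
        exact ⟨Q, c, P, zz, by omega, by linear_combination hperm + hZ⟩
    · -- n ≡ 1 (mod 4)
      have h41 : n % 4 = 1 := by omega
      by_cases h85 : n % 8 = 5
      · have hn0 : (0:ℤ) ≤ n := by omega
        have hmod : n.toNat % 8 = 5 := by omega
        obtain ⟨x, y, z, hxyz⟩ := three_squares_five_mod_eight n.toNat hmod
        rw [Int.toNat_of_nonneg hn0] at hxyz
        have h8' : (x^2+y^2+z^2) % 8 = 5 := by rw [← hxyz]; omega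
        obtain ⟨aa, s, t, hperm, ha2, hs2, ht2, hst4⟩ := pick_one_odd3 x y z h8'
        obtain ⟨U, hU⟩ : ∃ U, s + t = 2*U := ⟨(s+t)/2, by omega⟩
        obtain ⟨W, hW⟩ : ∃ W, s - t = 2*W := ⟨(s-t)/2, by omega⟩
        have hs' : s = U + W := by omega
        have ht' : t = U - W := by omega
        rw [hs', ht'] at hperm
        refine ⟨U, aa, W, 0, by omega, ?_⟩
        linear_combination hperm - hxyz
      · have hn9 : 9 ≤ n := by omega
        have hn0 : (0:ℤ) ≤ n - 4 := by omega
        have hmod : (n-4).toNat % 8 = 5 := by omega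
        obtain ⟨x, y, z, hxyz⟩ := three_squares_five_mod_eight (n-4).toNat hmod
        rw [Int.toNat_of_nonneg hn0] at hxyz
        have h8' : (x^2+y^2+z^2) % 8 = 5 := by rw [← hxyz]; omega
        obtain ⟨aa, s, t, hperm, ha2, hs2, ht2, hst4⟩ := pick_one_odd3 x y z h8'
        obtain ⟨U, hU⟩ : ∃ U, s + t = 2*U := ⟨(s+t)/2, by omega⟩
        obtain ⟨W, hW⟩ : ∃ W, s - t = 2*W := ⟨(s-t)/2, by omega⟩
        have hs' : s = U + W := by omega
        have ht' : t = U - W := by omega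
        rw [hs', ht'] at hperm
        refine ⟨U, aa, W, 1, by omega, ?_⟩
        linear_combination hperm - hxyz
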